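/- Suppose Assumption (Bayes boundary) holds, φ : ℝ → ℝ is strictly concave, strictly increasing, and differentiable at 0 with φ'(0) > 0, E[sup_{b∈B}(|φ(X·b)| + |φ(−X·b)|)] < ∞, B = {b ∈ ℝ^d : ‖b‖ ≤ R} for some R ∈ (0,∞), and for every nonzero v ∈ ℝ^d, P(X·v ≠ 0) > 0. Then the surrogate maximization problem max_{b∈B} Q_φ(b) admits a unique solution: there exists exactly one b_φ ∈ B such that Q_φ(b_φ) ≥ Q_φ(b) for all b ∈ B. -/

import Mathlib

open MeasureTheory
open scoped RealInnerProductSpace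

/-- The surrogate objective `Q_φ(b) = E[Y·φ(X·b) + (1−Y)·φ(−X·b)]`. -/
noncomputable def Qphi {Ω : Type*} [MeasurableSpace Ω] (P : Measure Ω) {d : ℕ}
    (X : Ω → EuclideanSpace ℝ (Fin d)) (Y : Ω → ℝ) (φ : ℝ → ℝ)
    (b : EuclideanSpace ℝ (Fin d)) : ℝ :=
  ∫ ω, (Y ω * φ (⟪X ω, b⟫) + (1 - Y ω) * φ (-⟪X ω, b⟫)) ∂P

theorem surrogate_maximizer_exists_unique
    {Ω : Type*} [MeasurableSpace Ω] (P : Measure Ω) [IsProbabilityMeasure P]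
    {d : ℕ} (X : Ω → EuclideanSpace ℝ (Fin d)) (Y : Ω → ℝ)
    (η : EuclideanSpace ℝ (Fin d) → ℝ)
    (hX : Measurable X) (hY : Measurable Y) (hY01 : ∀ ω, Y ω = 0 ∨ Y ω = 1)
    (hη : Measurable η) (hη01 : ∀ x, η x ∈ Set.Icc (0 : ℝ) 1)
    (hcond : ∀ g : EuclideanSpace ℝ (Fin d) → ℝ, Measurable g → (∃ C, ∀ x, |g x| ≤ C) →
      ∫ ω, Y ω * g (X ω) ∂P = ∫ ω, η (X ω) * g (X ω) ∂P)
    (B : Set (EuclideanSpace ℝ (Fin d))) (hBne : B.Nonempty) (hBcpt : IsCompact B)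
    (b₀ : EuclideanSpace ℝ (Fin d)) (hb₀B : b₀ ∈ B)
    -- Assumption (Bayes boundary)
    (hBayes₁ : ∀ᵐ ω ∂P, ((1 : ℝ) / 2 ≤ η (X ω) ↔ 0 ≤ ⟪X ω, b₀⟫))
    (hBayes₂ : 0 < P {ω | 0 < ⟪X ω, b₀⟫}) (hBayes₂' : 0 < P {ω | ⟪X ω, b₀⟫ < 0})
    -- Assumption (surrogate score function)
    (φ : ℝ → ℝ) (hφconc : StrictConcaveOn ℝ Set.univ φ) (hφmono : StrictMono φ)
    (hφdiff : DifferentiableAt ℝ φ 0) (hφderiv : 0 < deriv φ 0)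
    -- regularity conditions
    (henv : Integrable (fun ω => ⨆ b ∈ B, (|φ (⟪X ω, b⟫)| + |φ (-⟪X ω, b⟫)|)) P)
    (R : ℝ) (hR : 0 < R) (hBball : B = Metric.closedBall (0 : EuclideanSpace ℝ (Fin d)) R)
    (hndeg : ∀ v : EuclideanSpace ℝ (Fin d), v ≠ 0 → 0 < P {ω | ⟪X ω, v⟫ ≠ 0}) :
    ∃! bφ, bφ ∈ B ∧ ∀ b ∈ B, Qphi P X Y φ b ≤ Qphi P X Y φ bφ := by
  classical
  have hφcont : Continuous φ := by
    rw [← continuousOn_univ]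
    exact hφconc.concaveOn.continuousOn isOpen_univ
  set F : EuclideanSpace ℝ (Fin d) → Ω → ℝ :=
    fun b ω => Y ω * φ (⟪X ω, b⟫) + (1 - Y ω) * φ (-⟪X ω, b⟫) with hF
  have hQeq : ∀ b, Qphi P X Y φ b = ∫ ω, F b ω ∂P := fun b => rfl
  set env : Ω → ℝ := fun ω => ⨆ b ∈ B, (|φ (⟪X ω, b⟫)| + |φ (-⟪X ω, b⟫)|) with henvdef
  set g : Ω → EuclideanSpace ℝ (Fin d) → ℝ :=
    fun ω b => |φ (⟪X ω, b⟫)| + |φ (-⟪X ω, b⟫)| with hg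
  have henveq : ∀ ω, env ω = ⨆ b ∈ B, g ω b := fun ω => rfl
  have hgnonneg : ∀ ω b, 0 ≤ g ω b := fun ω b => add_nonneg (abs_nonneg _) (abs_nonneg _)
  have hgcont : ∀ ω, Continuous (g ω) := by
    intro ω
    exact ((hφcont.comp (continuous_const.inner continuous_id)).abs).add
      ((hφcont.comp (continuous_const.inner continuous_id).neg).abs)
  have henvbd : ∀ ω, ∀ b ∈ B, g ω b ≤ env ω := by
    intro ω b hb
    obtain ⟨C, hC⟩ := hBcpt.bddAbove_image (hgcont ω).continuousOn
    have hFle : ∀ b', (⨆ _ : b' ∈ B, g ω b') ≤ max C 0 := by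
      intro b'
      by_cases hb' : b' ∈ B
      · rw [ciSup_pos hb']
        exact le_max_of_le_left (hC (Set.mem_image_of_mem _ hb'))
      · haveI : IsEmpty (b' ∈ B) := ⟨hb'⟩
        rw [Real.iSup_of_isEmpty]
        exact le_max_right _ _
    have hbdd : BddAbove (Set.range fun b' => ⨆ _ : b' ∈ B, g ω b') := by
      refine ⟨max C 0, ?_⟩
      rintro _ ⟨b', rfl⟩
      exact hFle b'
    calc g ω b = ⨆ _ : b ∈ B, g ω b := by rw [ciSup_pos hb]
      _ ≤ env ω := by rw [henveq]; exact le_ciSup hbdd b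
  have henvnn : ∀ ω, 0 ≤ env ω := fun ω =>
    le_trans (hgnonneg ω b₀) (henvbd ω b₀ hb₀B)
  have hinner : ∀ b, Measurable (fun ω => (⟪X ω, b⟫ : ℝ)) :=
    fun b => hX.inner measurable_const
  have hFmeas : ∀ b, Measurable (F b) := by
    intro b
    exact (hY.mul (hφcont.measurable.comp (hinner b))).add
      ((measurable_const.sub hY).mul (hφcont.measurable.comp (hinner b).neg))
  have hFle : ∀ b ω, |F b ω| ≤ g ω b := by
    intro b ω
    rcases hY01 ω with h | h
    · simp only [hF, hg, h, zero_mul, sub_zero, one_mul, zero_add]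
      exact le_add_of_nonneg_left (abs_nonneg _)
    · simp only [hF, hg, h, one_mul, sub_self, zero_mul, add_zero]
      exact le_add_of_nonneg_right (abs_nonneg _)
  have hFint : ∀ b ∈ B, Integrable (F b) P := by
    intro b hb
    refine henv.mono (hFmeas b).aestronglyMeasurable
      (Filter.Eventually.of_forall fun ω => ?_)
    rw [Real.norm_eq_abs, Real.norm_eq_abs, abs_of_nonneg (henvnn ω)]
    exact (hFle b ω).trans (henvbd ω b hb)
  have hQcont : ContinuousOn (Qphi P X Y φ) B := by
    intro b hb
    have : ContinuousWithinAt (fun b' => ∫ ω, F b' ω ∂P) B b := by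
      refine continuousWithinAt_of_dominated
        (Filter.Eventually.of_forall fun b' => (hFmeas b').aestronglyMeasurable)
        ?_ henv ?_
      · refine eventually_nhdsWithin_of_forall fun b' hb' =>
          Filter.Eventually.of_forall fun ω => ?_
        rw [Real.norm_eq_abs]
        exact (hFle b' ω).trans (henvbd ω b' hb')
      · refine Filter.Eventually.of_forall fun ω => Continuous.continuousWithinAt ?_
        exact (continuous_const.mul
            (hφcont.comp (continuous_const.inner continuous_id))).add
          (continuous_const.mul
            (hφcont.comp (continuous_const.inner continuous_id).neg))
    exact this
  obtain ⟨bφ, hbφB, hmax⟩ := hBcpt.exists_isMaxOn hBne hQcont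
  refine ⟨bφ, ⟨hbφB, fun b hb => hmax hb⟩, ?_⟩
  rintro y ⟨hyB, hymax⟩
  by_contra hne
  -- both are maximizers with the same value
  have hQy : Qphi P X Y φ y = Qphi P X Y φ bφ :=
    le_antisymm (hmax hyB) (hymax bφ hbφB)
  -- the midpoint
  set m : EuclideanSpace ℝ (Fin d) := (1/2 : ℝ) • y + (1/2 : ℝ) • bφ with hm
  have hconv : Convex ℝ B := hBball ▸ convex_closedBall 0 R
  have hmB : m ∈ B := hconv hyB hbφB (by norm_num) (by norm_num) (by norm_num)
  have hinm : ∀ ω, (⟪X ω, m⟫ : ℝ) = (1/2 : ℝ) * ⟪X ω, y⟫ + (1/2 : ℝ) * ⟪X ω, bφ⟫ := by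
    intro ω
    rw [hm, inner_add_right, real_inner_smul_right, real_inner_smul_right]
  have hwk : ∀ s t : ℝ, (1/2 : ℝ) * φ s + (1/2 : ℝ) * φ t ≤ φ ((1/2 : ℝ) * s + (1/2 : ℝ) * t) := by
    intro s t
    have := hφconc.concaveOn.2 (Set.mem_univ s) (Set.mem_univ t)
      (by norm_num : (0:ℝ) ≤ 1/2) (by norm_num : (0:ℝ) ≤ 1/2) (by norm_num)
    simpa [smul_eq_mul] using this
  have hstr : ∀ s t : ℝ, s ≠ t →
      (1/2 : ℝ) * φ s + (1/2 : ℝ) * φ t < φ ((1/2 : ℝ) * s + (1/2 : ℝ) * t) := by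
    intro s t hst
    have := hφconc.2 (Set.mem_univ s) (Set.mem_univ t) hst
      (by norm_num : (0:ℝ) < 1/2) (by norm_num : (0:ℝ) < 1/2) (by norm_num)
    simpa [smul_eq_mul] using this
  have hptwk : ∀ ω, (1/2 : ℝ) * F y ω + (1/2 : ℝ) * F bφ ω ≤ F m ω := by
    intro ω
    rcases hY01 ω with h | h
    · have h1 : φ (-⟪X ω, m⟫) = φ ((1/2 : ℝ) * (-⟪X ω, y⟫) + (1/2 : ℝ) * (-⟪X ω, bφ⟫)) := by
        congr 1; rw [hinm ω]; ring
      have := hwk (-⟪X ω, y⟫) (-⟪X ω, bφ⟫)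
      simp only [hF, h, zero_mul, sub_zero, one_mul, zero_add]
      rw [h1]; linarith
    · have h1 : φ (⟪X ω, m⟫) = φ ((1/2 : ℝ) * (⟪X ω, y⟫) + (1/2 : ℝ) * (⟪X ω, bφ⟫)) := by
        congr 1; rw [hinm ω]
      have := hwk (⟪X ω, y⟫) (⟪X ω, bφ⟫)
      simp only [hF, h, one_mul, sub_self, zero_mul, add_zero]
      rw [h1]; linarith
  have hptst : ∀ ω, (⟪X ω, y⟫ : ℝ) ≠ ⟪X ω, bφ⟫ →
      (1/2 : ℝ) * F y ω + (1/2 : ℝ) * F bφ ω < F m ω := by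
    intro ω hωne
    rcases hY01 ω with h | h
    · have h1 : φ (-⟪X ω, m⟫) = φ ((1/2 : ℝ) * (-⟪X ω, y⟫) + (1/2 : ℝ) * (-⟪X ω, bφ⟫)) := by
        congr 1; rw [hinm ω]; ring
      have := hstr (-⟪X ω, y⟫) (-⟪X ω, bφ⟫) (by simpa using hωne)
      simp only [hF, h, zero_mul, sub_zero, one_mul, zero_add]
      rw [h1]; linarith
    · have h1 : φ (⟪X ω, m⟫) = φ ((1/2 : ℝ) * (⟪X ω, y⟫) + (1/2 : ℝ) * (⟪X ω, bφ⟫)) := by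
        congr 1; rw [hinm ω]
      have := hstr (⟪X ω, y⟫) (⟪X ω, bφ⟫) hωne
      simp only [hF, h, one_mul, sub_self, zero_mul, add_zero]
      rw [h1]; linarith
  -- difference function
  set D : Ω → ℝ := fun ω => F m ω - ((1/2 : ℝ) * F y ω + (1/2 : ℝ) * F bφ ω) with hD
  have hDnn : ∀ ω, 0 ≤ D ω := fun ω => sub_nonneg.2 (hptwk ω)
  have hDint : Integrable D P :=
    (hFint m hmB).sub (((hFint y hyB).const_mul _).add ((hFint bφ hbφB).const_mul _))
  have hsub : {ω | (⟪X ω, y - bφ⟫ : ℝ) ≠ 0} ⊆ Function.support D := by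
    intro ω hω
    have hωne : (⟪X ω, y⟫ : ℝ) ≠ ⟪X ω, bφ⟫ := by
      intro hc
      apply hω
      rw [inner_sub_right, hc, sub_self]
    exact ne_of_gt (sub_pos.2 (hptst ω hωne))
  have hDpos : 0 < ∫ ω, D ω ∂P := by
    rw [integral_pos_iff_support_of_nonneg_ae (Filter.Eventually.of_forall hDnn) hDint]
    exact lt_of_lt_of_le (hndeg (y - bφ) (sub_ne_zero.2 hne)) (measure_mono hsub)
  have hDval : ∫ ω, D ω ∂P =
      Qphi P X Y φ m - ((1/2 : ℝ) * Qphi P X Y φ y + (1/2 : ℝ) * Qphi P X Y φ bφ) := by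
    rw [hQeq, hQeq, hQeq]
    simp only [hD]
    have hadd : Integrable (fun ω => (1/2 : ℝ) * F y ω + (1/2 : ℝ) * F bφ ω) P := by
      exact ((hFint y hyB).const_mul _).add ((hFint bφ hbφB).const_mul _)
    have haddi : ∫ ω, ((1/2 : ℝ) * F y ω + (1/2 : ℝ) * F bφ ω) ∂P
        = (1/2 : ℝ) * ∫ ω, F y ω ∂P + (1/2 : ℝ) * ∫ ω, F bφ ω ∂P := by
      rw [integral_add ((hFint y hyB).const_mul _) ((hFint bφ hbφB).const_mul _),
        integral_const_mul, integral_const_mul]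
    rw [integral_sub (hFint m hmB) hadd, haddi]
  have hQm : Qphi P X Y φ m ≤ Qphi P X Y φ bφ := hmax hmB
  rw [hDval, hQy] at hDpos
  linarith
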